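/- Let N be a natural number and define the matrix Υ̂ = (γ̂_{ij})_{i,j=0}^N with γ̂_{ij} = -1/(i! · j! · (i+j+1)). Then Υ̂ = -Û^T D̂ Û, where D̂ is the diagonal matrix with entries d̂_k = (k!)^2 / ((2k)! (2k+1)!) for k = 0,...,N, and Û = (μ̂_{kj}) is the upper triangular matrix with μ̂_{kj} = (2k+1)! j! / (k! (j-k)! (k+j+1)!) for j ≥ k and μ̂_{kj} = 0 for j < k. -/

import Mathlib

open Finset

/-- `F i j k = (2k+1)/((i-k)! (i+k+1)! (j-k)! (j+k+1)!)`. -/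
noncomputable def Fa (i j k : ℕ) : ℝ :=
  (2 * (k : ℝ) + 1) / ((Nat.factorial (i - k) : ℝ) * (Nat.factorial (i + k + 1) : ℝ) *
    (Nat.factorial (j - k) : ℝ) * (Nat.factorial (j + k + 1) : ℝ))

/-- Telescoping certificate. -/
noncomputable def Ga (i j k : ℕ) : ℝ :=
  -(k : ℝ) ^ 2 / (((j : ℝ) + 1) ^ 2 * ((i : ℝ) + (j : ℝ) + 2) *
    ((Nat.factorial (i - k) : ℝ) * (Nat.factorial (i + k) : ℝ) *
     (Nat.factorial (j + 1 - k) : ℝ) * (Nat.factorial (j + k + 1) : ℝ)))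

lemma fne (n : ℕ) : ((Nat.factorial n : ℕ) : ℝ) ≠ 0 := by
  exact_mod_cast Nat.factorial_ne_zero n

lemma cert_real (x p q A B S R : ℝ) (hx : 0 ≤ x) (hp : 0 ≤ p) (hq : 0 ≤ q)
    (hA : A ≠ 0) (hB : B ≠ 0) (hS : S ≠ 0) (hR : R ≠ 0) :
    (2 * x + 1) /
        ((p + q + 1) * B * ((2 * x + p + q + 1 + 1) * ((2 * x + p + q + 1) * S)) *
            ((p + 1) * A) *
          ((2 * x + p + 1 + 1) * ((2 * x + p + 1) * R))) =
      (x + p + q + 1 + (x + p) + 1) / ((x + p + 1) ^ 2 * (x + p + q + 1 + (x + p) + 2)) *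
          ((2 * x + 1) /
            ((p + q + 1) * B * ((2 * x + p + q + 1 + 1) * ((2 * x + p + q + 1) * S)) *
                A *
              ((2 * x + p + 1) * R))) +
        (-(x + 1) ^ 2 /
            ((x + p + 1) ^ 2 * (x + p + q + 1 + (x + p) + 2) *
              (B * ((2 * x + p + q + 1 + 1) * ((2 * x + p + q + 1) * S)) * A *
                ((2 * x + p + 1 + 1) * ((2 * x + p + 1) * R)))) -
          -x ^ 2 /
            ((x + p + 1) ^ 2 * (x + p + q + 1 + (x + p) + 2) *
              ((p + q + 1) * B * ((2 * x + p + q + 1) * S) * ((p + 1) * A) *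
                ((2 * x + p + 1) * R)))) := by
  have n1 : x + p + 1 ≠ 0 := by positivity
  have nW : x + p + q + 1 + (x + p) + 2 ≠ 0 := by positivity
  have n3 : p + q + 1 ≠ 0 := by positivity
  have n4 : 2 * x + p + q + 1 + 1 ≠ 0 := by positivity
  have n5 : 2 * x + p + q + 1 ≠ 0 := by positivity
  have n6 : p + 1 ≠ 0 := by positivity
  have n7 : 2 * x + p + 1 + 1 ≠ 0 := by positivity
  have n8 : 2 * x + p + 1 ≠ 0 := by positivity
  generalize hW : x + p + q + 1 + (x + p) + 2 = W at *
  generalize hc : x + p + q + 1 + (x + p) + 1 = cN at *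
  generalize h4 : 2 * x + p + q + 1 + 1 = g4 at *
  generalize h5 : 2 * x + p + q + 1 = g5 at *
  generalize h7 : 2 * x + p + 1 + 1 = g7 at *
  generalize h8 : 2 * x + p + 1 = g8 at *
  generalize h3 : p + q + 1 = g3 at *
  generalize h6 : p + 1 = g6 at *
  generalize h1 : x + p + 1 = g1 at *
  generalize hn : 2 * x + 1 = nL at *
  generalize hm : x + 1 = m at *
  have n1sq : g1 ^ 2 ≠ 0 := pow_ne_zero 2 n1
  have hD : g1 ^ 2 * W * (g3 * B * (g4 * (g5 * S)) * (g6 * A) * (g7 * (g8 * R))) ≠ 0 := by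
    apply_rules [mul_ne_zero]
  have d1 : g3 * B * (g4 * (g5 * S)) * (g6 * A) * (g7 * (g8 * R)) ≠ 0 := by
    apply_rules [mul_ne_zero]
  have d2 : g1 ^ 2 * W * (g3 * B * (g4 * (g5 * S)) * A * (g8 * R)) ≠ 0 := by
    apply_rules [mul_ne_zero]
  have d3 : g1 ^ 2 * W * (B * (g4 * (g5 * S)) * A * (g7 * (g8 * R))) ≠ 0 := by
    apply_rules [mul_ne_zero]
  have d4 : g1 ^ 2 * W * (g3 * B * (g5 * S) * (g6 * A) * (g8 * R)) ≠ 0 := by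
    apply_rules [mul_ne_zero]
  rw [div_mul_div_comm]
  rw [show nL / (g3 * B * (g4 * (g5 * S)) * (g6 * A) * (g7 * (g8 * R))) =
      nL * (g1 ^ 2 * W) /
        (g1 ^ 2 * W * (g3 * B * (g4 * (g5 * S)) * (g6 * A) * (g7 * (g8 * R)))) from by
    rw [div_eq_div_iff d1 hD]; ring]
  rw [show cN * nL /
        (g1 ^ 2 * W * (g3 * B * (g4 * (g5 * S)) * A * (g8 * R))) =
      cN * nL * (g6 * g7) /
        (g1 ^ 2 * W * (g3 * B * (g4 * (g5 * S)) * (g6 * A) * (g7 * (g8 * R)))) from by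
    rw [div_eq_div_iff d2 hD]; ring]
  rw [show -m ^ 2 / (g1 ^ 2 * W * (B * (g4 * (g5 * S)) * A * (g7 * (g8 * R)))) =
      -m ^ 2 * (g3 * g6) /
        (g1 ^ 2 * W * (g3 * B * (g4 * (g5 * S)) * (g6 * A) * (g7 * (g8 * R)))) from by
    rw [div_eq_div_iff d3 hD]; ring]
  rw [show -x ^ 2 / (g1 ^ 2 * W * (g3 * B * (g5 * S) * (g6 * A) * (g8 * R))) =
      -x ^ 2 * (g4 * g7) /
        (g1 ^ 2 * W * (g3 * B * (g4 * (g5 * S)) * (g6 * A) * (g7 * (g8 * R)))) from by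
    rw [div_eq_div_iff d4 hD]; ring]
  rw [div_sub_div_same, ← add_div]
  congr 1
  subst hW hc h4 h5 h7 h8 h3 h6 h1 hn hm
  ring

lemma cert (i j k : ℕ) (hk : k ≤ j) (hj : j < i) :
    Fa i (j + 1) k =
      ((i : ℝ) + j + 1) / (((j : ℝ) + 1) ^ 2 * ((i : ℝ) + j + 2)) * Fa i j k +
        (Ga i j (k + 1) - Ga i j k) := by
  obtain ⟨a, rfl⟩ : ∃ a, j = k + a := ⟨j - k, by omega⟩
  obtain ⟨b, rfl⟩ : ∃ b, i = k + a + b + 1 := ⟨i - (k + a + 1), by omega⟩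
  simp only [Fa, Ga,
    show k + a + b + 1 - k = a + b + 1 from by omega,
    show k + a + 1 - k = a + 1 from by omega,
    show k + a - k = a from by omega,
    show k + a + b + 1 - (k + 1) = a + b from by omega,
    show k + a + 1 - (k + 1) = a from by omega,
    show k + a + b + 1 + k + 1 = 2 * k + a + b + 1 + 1 from by omega,
    show k + a + b + 1 + (k + 1) = 2 * k + a + b + 1 + 1 from by omega,
    show k + a + b + 1 + k = 2 * k + a + b + 1 from by omega,
    show k + a + 1 + k + 1 = 2 * k + a + 1 + 1 from by omega,
    show k + a + k + 1 = 2 * k + a + 1 from by omega,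
    show k + a + (k + 1) + 1 = 2 * k + a + 1 + 1 from by omega,
    Nat.factorial_succ]
  push_cast
  exact cert_real (k : ℝ) (a : ℝ) (b : ℝ) (Nat.factorial a : ℝ) (Nat.factorial (a + b) : ℝ)
    (Nat.factorial (2 * k + a + b) : ℝ) (Nat.factorial (2 * k + a) : ℝ)
    (Nat.cast_nonneg _) (Nat.cast_nonneg _) (Nat.cast_nonneg _)
    (fne a) (fne (a + b)) (fne (2 * k + a + b)) (fne (2 * k + a))

lemma key : ∀ j i : ℕ, j ≤ i →
    ∑ k ∈ Finset.range (j + 1), Fa i j k =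
      1 / ((Nat.factorial i : ℝ) ^ 2 * (Nat.factorial j : ℝ) ^ 2 * ((i : ℝ) + (j : ℝ) + 1)) := by
  intro j
  induction j with
  | zero =>
    intro i _
    simp only [Finset.range_one, Finset.sum_singleton, Fa, Nat.sub_zero, Nat.add_zero, Nat.zero_add,
      Nat.factorial_succ, Nat.factorial_zero, Nat.sub_self]
    push_cast
    have := fne i
    have h1 : (i : ℝ) + 1 ≠ 0 := by positivity
    field_simp
    ring
  | succ j ih =>
    intro i hi
    rw [Finset.sum_range_succ]
    rw [Finset.sum_congr rfl (fun k hk => cert i j k (by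
          simp only [Finset.mem_range] at hk; omega) (by omega))]
    rw [Finset.sum_add_distrib, ← Finset.mul_sum, ih i (by omega),
      Finset.sum_range_sub (fun k => Ga i j k)]
    have h0 : Ga i j 0 = 0 := by simp [Ga]
    rw [h0]
    obtain ⟨b, rfl⟩ : ∃ b, i = j + 1 + b := ⟨i - (j + 1), by omega⟩
    have hA : Ga (j + 1 + b) j (j + 1) + Fa (j + 1 + b) (j + 1) (j + 1) = 0 := by
      simp only [Ga, Fa,
        show j + 1 + b - (j + 1) = b from by omega,
        show j + 1 - (j + 1) = 0 from by omega,
        show j + 1 + b + (j + 1) = 2 * j + b + 2 from by omega,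
        show j + 1 + b + (j + 1) + 1 = 2 * j + b + 2 + 1 from by omega,
        show j + (j + 1) + 1 = 2 * j + 2 from by omega,
        show j + 1 + (j + 1) + 1 = 2 * j + 2 + 1 from by omega,
        Nat.factorial_succ, Nat.factorial_zero]
      push_cast
      have f1 := fne b
      have f2 := fne (2 * j + b + 2)
      have f3 := fne (2 * j + 2)
      have p1 : (j : ℝ) + 1 ≠ 0 := by positivity
      have p2 : (j : ℝ) + 1 + b + j + 2 ≠ 0 := by positivity
      have p3 : 2 * (j : ℝ) + b + 2 + 1 ≠ 0 := by positivity
      have p4 : 2 * (j : ℝ) + 2 + 1 ≠ 0 := by positivity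
      field_simp
      ring
    have hB : ((j : ℝ) + 1 + b + j + 1) / (((j : ℝ) + 1) ^ 2 * ((j : ℝ) + 1 + b + j + 2)) *
          (1 / ((Nat.factorial (j + 1 + b) : ℝ) ^ 2 * (Nat.factorial j : ℝ) ^ 2 *
            ((j : ℝ) + 1 + b + j + 1))) =
        1 / ((Nat.factorial (j + 1 + b) : ℝ) ^ 2 * (Nat.factorial (j + 1) : ℝ) ^ 2 *
          ((j : ℝ) + 1 + b + (j + 1) + 1)) := by
      rw [Nat.factorial_succ]
      push_cast
      have f1 := fne (j + 1 + b)
      have f2 := fne j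
      have p1 : (j : ℝ) + 1 ≠ 0 := by positivity
      have p2 : (j : ℝ) + 1 + b + j + 2 ≠ 0 := by positivity
      have p3 : (j : ℝ) + 1 + b + j + 1 ≠ 0 := by positivity
      field_simp
      ring
    push_cast at hB ⊢
    linear_combination hA + hB

lemma Fa_symm (i j k : ℕ) : Fa i j k = Fa j i k := by
  unfold Fa; ring

lemma sumF (i j : ℕ) :
    ∑ k ∈ Finset.range (min i j + 1), Fa i j k =
      1 / ((Nat.factorial i : ℝ) ^ 2 * (Nat.factorial j : ℝ) ^ 2 * ((i : ℝ) + (j : ℝ) + 1)) := by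
  rcases le_total j i with h | h
  · rw [min_eq_right h]; exact key j i h
  · rw [min_eq_left h, Finset.sum_congr rfl (fun k _ => Fa_symm i j k), key i j h]; ring

lemma term_eq (i j k : ℕ) :
    ((Nat.factorial (2 * k + 1) : ℝ) * (Nat.factorial i : ℝ)) /
        ((Nat.factorial k : ℝ) * (Nat.factorial (i - k) : ℝ) * (Nat.factorial (k + i + 1) : ℝ)) *
      ((Nat.factorial k : ℝ) ^ 2 /
          ((Nat.factorial (2 * k) : ℝ) * (Nat.factorial (2 * k + 1) : ℝ)) *
        (((Nat.factorial (2 * k + 1) : ℝ) * (Nat.factorial j : ℝ)) /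
          ((Nat.factorial k : ℝ) * (Nat.factorial (j - k) : ℝ) * (Nat.factorial (k + j + 1) : ℝ)))) =
      (Nat.factorial i : ℝ) * (Nat.factorial j : ℝ) * Fa i j k := by
  unfold Fa
  rw [show k + i + 1 = i + k + 1 from by omega,
    show k + j + 1 = j + k + 1 from by omega,
    Nat.factorial_succ (2 * k)]
  have f1 := fne k
  have f2 := fne (2 * k)
  have f3 := fne (i - k)
  have f4 := fne (i + k + 1)
  have f5 := fne (j - k)
  have f6 := fne (j + k + 1)
  have f7 := fne i
  have f8 := fne j
  have p1 : 2 * (k : ℝ) + 1 ≠ 0 := by positivity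
  push_cast
  field_simp

/-- Cholesky type decomposition of the scaled Hilbert matrix:
`Υ̂ = -Û^T D̂ Û` where `γ̂_{ij} = -1/(i! j! (i+j+1))`,
`d̂_k = (k!)²/((2k)!(2k+1)!)`, and `μ̂_{kj} = (2k+1)! j!/(k! (j-k)! (k+j+1)!)` for `j ≥ k`. -/
theorem hilbert_type_cholesky (N : ℕ) :
    (Matrix.of fun i j : Fin (N + 1) =>
        -(1 / ((Nat.factorial i.val : ℝ) * (Nat.factorial j.val : ℝ) * (i.val + j.val + 1)))) =
      -((Matrix.of fun k j : Fin (N + 1) =>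
            if k.val ≤ j.val then
              ((Nat.factorial (2 * k.val + 1) : ℝ) * (Nat.factorial j.val : ℝ)) /
                ((Nat.factorial k.val : ℝ) * (Nat.factorial (j.val - k.val) : ℝ) *
                  (Nat.factorial (k.val + j.val + 1) : ℝ))
            else 0).transpose *
          (Matrix.diagonal fun k : Fin (N + 1) =>
            ((Nat.factorial k.val : ℝ) ^ 2) /
              ((Nat.factorial (2 * k.val) : ℝ) * (Nat.factorial (2 * k.val + 1) : ℝ))) *
          (Matrix.of fun k j : Fin (N + 1) =>
            if k.val ≤ j.val then
              ((Nat.factorial (2 * k.val + 1) : ℝ) * (Nat.factorial j.val : ℝ)) /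
                ((Nat.factorial k.val : ℝ) * (Nat.factorial (j.val - k.val) : ℝ) *
                  (Nat.factorial (k.val + j.val + 1) : ℝ))
            else 0)) := by
  rw [Matrix.mul_assoc]
  ext i j
  simp only [Matrix.neg_apply, Matrix.of_apply]
  rw [Matrix.mul_apply]
  simp only [Matrix.diagonal_mul, Matrix.transpose_apply, Matrix.of_apply]
  rw [neg_inj]
  rw [Fin.sum_univ_eq_sum_range (fun k : ℕ =>
    (if k ≤ i.val then
        ((Nat.factorial (2 * k + 1) : ℝ) * (Nat.factorial i.val : ℝ)) /
          ((Nat.factorial k : ℝ) * (Nat.factorial (i.val - k) : ℝ) *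
            (Nat.factorial (k + i.val + 1) : ℝ))
      else 0) *
      ((Nat.factorial k : ℝ) ^ 2 /
          ((Nat.factorial (2 * k) : ℝ) * (Nat.factorial (2 * k + 1) : ℝ)) *
        (if k ≤ j.val then
          ((Nat.factorial (2 * k + 1) : ℝ) * (Nat.factorial j.val : ℝ)) /
            ((Nat.factorial k : ℝ) * (Nat.factorial (j.val - k) : ℝ) *
              (Nat.factorial (k + j.val + 1) : ℝ))
        else 0))) (N + 1)]
  rw [← Finset.sum_subset (Finset.range_subset_range.mpr (by
        have := i.isLt; have := j.isLt; omega :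
          min i.val j.val + 1 ≤ N + 1))
      (by
        intro k hk hk'
        simp only [Finset.mem_range] at hk hk'
        rcases (by omega : ¬ k ≤ i.val ∨ ¬ k ≤ j.val) with h | h
        · rw [if_neg h, zero_mul]
        · rw [if_neg h, mul_zero, mul_zero])]
  rw [Finset.sum_congr rfl (fun k hk => by
    simp only [Finset.mem_range] at hk
    have hki : k ≤ i.val := by omega
    have hkj : k ≤ j.val := by omega
    rw [if_pos hki, if_pos hkj, term_eq i.val j.val k])]
  rw [← Finset.mul_sum, sumF]
  have f7 := fne i.val
  have f8 := fne j.val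
  have p1 : (i.val : ℝ) + (j.val : ℝ) + 1 ≠ 0 := by positivity
  field_simp
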